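/- For every n ≥ 3, the reverse permutation R_n can be sorted with LRE in exactly (3n² − 19n + 36)/2 moves; that is, R_n is a product of (3n² − 19n + 36)/2 elements of G (in particular, the minimum number of LRE moves needed to sort R_n is at most (3/2)n² − (19/2)n + 18). -/

import Mathlib

set_option maxRecDepth 8000

open Equiv

section Aux
variable {n : ℕ} (σ τ : Equiv.Perm (Fin n))

/-- word whose product is `swap 0 (k+1)` -/
def sWord : ℕ → List (Equiv.Perm (Fin n))
  | 0 => [τ]
  | k+1 => [τ, σ] ++ sWord k ++ [σ⁻¹, τ]

def pairWord (i : ℕ) : List (Equiv.Perm (Fin n)) :=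
  List.replicate i σ ++ sWord σ τ (n - 2 - 2*i) ++ List.replicate i σ⁻¹

def mainWord : ℕ → List (Equiv.Perm (Fin n))
  | 0 => [σ⁻¹, τ, σ]
  | j+1 => mainWord j ++ pairWord σ τ (j+1)

lemma sWord_length : ∀ k, (sWord σ τ k).length = 4*k+1
  | 0 => rfl
  | k+1 => by
      simp only [sWord, List.length_append, List.length_cons, List.length_nil,
        sWord_length k]
      omega

lemma pairWord_length (i : ℕ) :
    (pairWord σ τ i).length = 2*i + (4*(n-2-2*i)+1) := by
  simp only [pairWord, List.length_append, List.length_replicate, sWord_length]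
  omega

lemma mainWord_length : ∀ j, 2*j+2 ≤ n →
    (mainWord σ τ j).length + 3*(j*j) + 10*j = 3 + 4*(j*n)
  | 0, _ => by simp [mainWord]
  | j+1, h => by
      have ih := mainWord_length j (by omega)
      have h4 : 4*(n-2-2*(j+1)) + (8*j+16) = 4*n := by omega
      have e1 : (j+1)*(j+1) = j*j + 2*j + 1 := by ring
      have e2 : (j+1)*n = j*n + n := by ring
      simp only [mainWord, List.length_append, pairWord_length]
      linarith

lemma sWord_mem : ∀ k g, g ∈ sWord σ τ k → g = σ ∨ g = σ⁻¹ ∨ g = τ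
  | 0, g, hg => by simp only [sWord, List.mem_singleton] at hg; tauto
  | k+1, g, hg => by
      simp only [sWord, List.mem_append, List.mem_cons, List.mem_singleton,
        List.not_mem_nil, or_false] at hg
      rcases hg with ((rfl | rfl) | hg) | (rfl | rfl)
      · tauto
      · tauto
      · exact sWord_mem k g hg
      · tauto
      · tauto

lemma pairWord_mem (i : ℕ) (g : Equiv.Perm (Fin n)) (hg : g ∈ pairWord σ τ i) :
    g = σ ∨ g = σ⁻¹ ∨ g = τ := by
  simp only [pairWord, List.mem_append, List.mem_replicate] at hg
  rcases hg with (⟨-, rfl⟩ | hg) | ⟨-, rfl⟩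
  · tauto
  · exact sWord_mem σ τ _ g hg
  · tauto

lemma mainWord_mem : ∀ j g, g ∈ mainWord σ τ j → g = σ ∨ g = σ⁻¹ ∨ g = τ
  | 0, g, hg => by
      simp only [mainWord, List.mem_cons, List.not_mem_nil, or_false] at hg
      tauto
  | j+1, g, hg => by
      simp only [mainWord, List.mem_append] at hg
      rcases hg with hg | hg
      · exact mainWord_mem j g hg
      · exact pairWord_mem σ τ _ g hg

lemma sigma_apply (hσ : ∀ i : Fin n, (σ i : ℕ) = ((i : ℕ) + 1) % n)
    {v : ℕ} (hv : v < n) (h : v + 1 < n) :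
    σ ⟨v, hv⟩ = ⟨v+1, h⟩ :=
  Fin.ext (by rw [hσ]; exact Nat.mod_eq_of_lt h)

lemma sigma_top (hσ : ∀ i : Fin n, (σ i : ℕ) = ((i : ℕ) + 1) % n) (hn : 1 ≤ n) :
    σ ⟨n-1, by omega⟩ = ⟨0, by omega⟩ := by
  apply Fin.ext
  rw [hσ]
  show (n-1+1) % n = 0
  rw [Nat.sub_add_cancel hn, Nat.mod_self]

lemma tau_eq (hτ : ∀ i : Fin n, (τ i : ℕ) =
      if (i : ℕ) = 0 then 1 else if (i : ℕ) = 1 then 0 else (i : ℕ))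
    (hn : 2 ≤ n) :
    τ = Equiv.swap ⟨0, by omega⟩ ⟨1, by omega⟩ := by
  ext i
  rw [hτ, Equiv.swap_apply_def]
  rcases i with ⟨v, hv⟩
  by_cases h0 : v = 0
  · subst h0; simp
  · by_cases h1 : v = 1
    · subst h1
      rw [if_neg (by simp [Fin.ext_iff]), if_pos (by simp [Fin.ext_iff])]
      simp [h0]
    · rw [if_neg (by simp [Fin.ext_iff]; omega), if_neg (by simp [Fin.ext_iff]; omega)]
      simp [h0, h1]

lemma tau_big (hτ : ∀ i : Fin n, (τ i : ℕ) =
      if (i : ℕ) = 0 then 1 else if (i : ℕ) = 1 then 0 else (i : ℕ))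
    {v : ℕ} (hv : v < n) (h2 : 2 ≤ v) : τ ⟨v, hv⟩ = ⟨v, hv⟩ := by
  apply Fin.ext
  rw [hτ]
  simp only [Fin.val_mk]
  rw [if_neg (by omega), if_neg (by omega)]

lemma sWord_prod (hσ : ∀ i : Fin n, (σ i : ℕ) = ((i : ℕ) + 1) % n)
    (hτ : ∀ i : Fin n, (τ i : ℕ) =
      if (i : ℕ) = 0 then 1 else if (i : ℕ) = 1 then 0 else (i : ℕ)) :
    ∀ k, (h : k + 2 ≤ n) →
    (sWord σ τ k).prod = Equiv.swap ⟨0, by omega⟩ ⟨k+1, by omega⟩ := by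
  intro k
  induction k with
  | zero =>
    intro h
    simp only [sWord, List.prod_singleton]
    exact tau_eq τ hτ (by omega)
  | succ k IH =>
    intro h
    have ih := IH (by omega)
    show ([τ, σ] ++ sWord σ τ k ++ [σ⁻¹, τ]).prod = _
    rw [List.prod_append, List.prod_append, ih]
    simp only [List.prod_cons, List.prod_nil, mul_one]
    have hassoc : ∀ a b c d e : Equiv.Perm (Fin n),
        a * b * c * (d * e) = a * (b * c * d) * e := by intros; group
    rw [hassoc]
    have conj1 : σ * Equiv.swap ⟨0, by omega⟩ ⟨k+1, by omega⟩ * σ⁻¹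
        = Equiv.swap ⟨1, by omega⟩ ⟨k+2, by omega⟩ := by
      rw [← Equiv.swap_apply_apply]
      congr 1
      · exact sigma_apply σ hσ _ _
      · exact sigma_apply σ hσ _ _
    rw [conj1]
    have hτinv : τ⁻¹ = τ := by
      rw [tau_eq τ hτ (by omega)]; exact Equiv.swap_inv _ _
    nth_rewrite 2 [← hτinv]
    rw [← Equiv.swap_apply_apply]
    congr 1
    · apply Fin.ext
      rw [hτ]
      norm_num
    · exact tau_big τ hτ _ (by omega)

lemma sigma_pow_apply (hσ : ∀ i : Fin n, (σ i : ℕ) = ((i : ℕ) + 1) % n) :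
    ∀ (i : ℕ) {v : ℕ} (hv : v < n) (h : v + i < n),
    (σ^i) ⟨v, hv⟩ = ⟨v+i, h⟩ := by
  intro i
  induction i with
  | zero => intro v hv h; simp
  | succ i IH =>
    intro v hv h
    rw [pow_succ, Equiv.Perm.mul_apply,
      sigma_apply σ hσ hv (by omega), IH (by omega) (by omega)]
    apply Fin.ext
    show v + 1 + i = v + (i+1)
    omega

lemma pairWord_prod (hσ : ∀ i : Fin n, (σ i : ℕ) = ((i : ℕ) + 1) % n)
    (hτ : ∀ i : Fin n, (τ i : ℕ) =
      if (i : ℕ) = 0 then 1 else if (i : ℕ) = 1 then 0 else (i : ℕ))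
    (i : ℕ) (h : 2*i + 2 ≤ n) :
    (pairWord σ τ i).prod = Equiv.swap ⟨i, by omega⟩ ⟨n-1-i, by omega⟩ := by
  unfold pairWord
  rw [List.prod_append, List.prod_append, List.prod_replicate, List.prod_replicate,
    sWord_prod σ τ hσ hτ (n-2-2*i) (by omega), inv_pow,
    ← Equiv.swap_apply_apply]
  congr 1
  · rw [sigma_pow_apply σ hσ i _ (by omega)]
    exact Fin.ext (Nat.zero_add i)
  · rw [sigma_pow_apply σ hσ i _ (by omega)]
    apply Fin.ext
    show n-2-2*i+1+i = n-1-i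
    omega

lemma mainWord_prod (hσ : ∀ i : Fin n, (σ i : ℕ) = ((i : ℕ) + 1) % n)
    (hτ : ∀ i : Fin n, (τ i : ℕ) =
      if (i : ℕ) = 0 then 1 else if (i : ℕ) = 1 then 0 else (i : ℕ)) :
    ∀ j, 2*j+2 ≤ n → ∀ x : Fin n,
    (((mainWord σ τ j).prod) x : ℕ) =
      if (x:ℕ) ≤ j ∨ n-1-j ≤ (x:ℕ) then n-1-(x:ℕ) else (x:ℕ) := by
  intro j
  induction j with
  | zero =>
    intro h x
    have hprod : (mainWord σ τ 0).prod = Equiv.swap ⟨n-1, by omega⟩ ⟨0, by omega⟩ := by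
      show ([σ⁻¹, τ, σ] : List _).prod = _
      simp only [List.prod_cons, List.prod_nil, mul_one]
      have h1 : σ⁻¹ (⟨0, by omega⟩ : Fin n) = ⟨n-1, by omega⟩ := by
        rw [Equiv.Perm.inv_eq_iff_eq]
        exact (sigma_top σ hσ (by omega)).symm
      have h2 : σ⁻¹ (⟨1, by omega⟩ : Fin n) = ⟨0, by omega⟩ := by
        rw [Equiv.Perm.inv_eq_iff_eq]
        exact (sigma_apply σ hσ _ _).symm
      calc σ⁻¹ * (τ * σ)
          = σ⁻¹ * Equiv.swap ⟨0, by omega⟩ ⟨1, by omega⟩ * (σ⁻¹)⁻¹ := by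
            rw [tau_eq τ hτ (by omega)]; group
        _ = Equiv.swap (σ⁻¹ ⟨0, by omega⟩) (σ⁻¹ ⟨1, by omega⟩) :=
            (Equiv.swap_apply_apply _ _ _).symm
        _ = _ := by rw [h1, h2]
    rw [hprod]
    have hs : ((Equiv.swap (⟨n-1, by omega⟩ : Fin n) ⟨0, by omega⟩) x : ℕ)
        = if (x:ℕ) = n-1 then 0 else if (x:ℕ) = 0 then n-1 else (x:ℕ) := by
      rw [Equiv.swap_apply_def]
      simp only [apply_ite (Fin.val), Fin.ext_iff, Fin.val_mk]
    rw [hs]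
    rcases x with ⟨v, hv⟩
    simp only [Fin.val_mk]
    split_ifs <;> omega
  | succ j IH =>
    intro h x
    have ih := IH (by omega)
    show ((((mainWord σ τ j) ++ pairWord σ τ (j+1)).prod) x : ℕ) = _
    rw [List.prod_append, Equiv.Perm.mul_apply,
      pairWord_prod σ τ hσ hτ (j+1) (by omega), ih]
    have hs : ((Equiv.swap (⟨j+1, by omega⟩ : Fin n) ⟨n-1-(j+1), by omega⟩) x : ℕ)
        = if (x:ℕ) = j+1 then n-1-(j+1) else
            if (x:ℕ) = n-1-(j+1) then j+1 else (x:ℕ) := by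
      rw [Equiv.swap_apply_def]
      simp only [apply_ite (Fin.val), Fin.ext_iff, Fin.val_mk]
    rw [hs]
    rcases x with ⟨v, hv⟩
    simp only [Fin.val_mk]
    split_ifs <;> omega

end Aux

/-- For every `n ≥ 3`, the reverse permutation `R_n` can be sorted with LRE in exactly
`(3n² - 19n + 36)/2` moves, i.e. `R_n` is a product of that many elements of
`G = {σ, σ⁻¹, τ}`.  To avoid natural subtraction the count `k = gs.length` is expressed by
the equivalent equation `2k + 19n = 3n² + 36`.  Permutations of `{1,…,n}` are modelled as
`Equiv.Perm (Fin n)` with `i : Fin n` representing the 1-based index `(i : ℕ) + 1`: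
`σ` is the left-rotation, `τ` the transposition of the first two positions, and
`R = R_n` sends `i ↦ n + 1 - i`. -/
theorem sort_reverse_upper_bound (n : ℕ) (hn : 3 ≤ n)
    (σ τ R : Equiv.Perm (Fin n))
    (hσ : ∀ i : Fin n, (σ i : ℕ) = ((i : ℕ) + 1) % n)
    (hτ : ∀ i : Fin n, (τ i : ℕ) =
      if (i : ℕ) = 0 then 1 else if (i : ℕ) = 1 then 0 else (i : ℕ))
    (hR : ∀ i : Fin n, (R i : ℕ) = n - 1 - (i : ℕ)) :
    ∃ gs : List (Equiv.Perm (Fin n)),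
      2 * gs.length + 19 * n = 3 * n ^ 2 + 36 ∧
      (∀ g ∈ gs, g = σ ∨ g = σ⁻¹ ∨ g = τ) ∧
      gs.prod = R := by
  by_cases hbig : 12 ≤ n
  · -- general construction
      set h := n / 2 with hh
      have hj : 2*(h-1)+2 ≤ n := by omega
      have hfinal : (mainWord σ τ (h-1)).prod = R := by
        ext x
        rw [hR, mainWord_prod σ τ hσ hτ (h-1) hj x]
        split_ifs with hc
        · rfl
        · omega
      have hlen := mainWord_length σ τ (h-1) hj
      set L := (mainWord σ τ (h-1)).length with hLdef
      have h6 : 6 ≤ h := by omega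
      obtain ⟨i, hi⟩ : ∃ i, h = i + 6 := ⟨h - 6, by omega⟩
      obtain ⟨w, hw⟩ : ∃ w, i*(i+1) = 2*w := (Nat.even_mul_succ_self i).exists_two_nsmul _
      have hw2 : 2*w = i*i + i := by
        have : i*(i+1) = i*i + i := by ring
        linarith
      have hmem : ∀ g ∈ mainWord σ τ (h-1), g = σ ∨ g = σ⁻¹ ∨ g = τ :=
        mainWord_mem σ τ (h-1)
      have hone : ∀ p : ℕ, ((List.replicate p σ ++ List.replicate p σ⁻¹) ++
          mainWord σ τ (h-1)).prod = R := by
        intro p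
        rw [List.prod_append, List.prod_append, List.prod_replicate, List.prod_replicate,
          inv_pow, mul_inv_cancel, one_mul, hfinal]
      have hmem2 : ∀ p : ℕ, ∀ g ∈ (List.replicate p σ ++ List.replicate p σ⁻¹) ++
          mainWord σ τ (h-1), g = σ ∨ g = σ⁻¹ ∨ g = τ := by
        intro p g hg
        simp only [List.mem_append, List.mem_replicate] at hg
        rcases hg with (⟨-, rfl⟩ | ⟨-, rfl⟩) | hg
        · tauto
        · tauto
        · exact hmem g hg
      have hlen2 : ∀ p : ℕ, ((List.replicate p σ ++ List.replicate p σ⁻¹) ++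
          mainWord σ τ (h-1)).length = 2*p + L := by
        intro p
        simp only [List.length_append, List.length_replicate, hLdef]
        omega
      have hhm1 : h - 1 = i + 5 := by omega
      rcases (show n = 2*h ∨ n = 2*h + 1 by omega) with hn2 | hn2
      · -- even case, n = 2i+12, padding p = w + 2i + 1
        have e1 : (h-1)*(h-1) = i*i + 10*i + 25 := by rw [hhm1]; ring
        have e2 : (h-1)*n = 2*(i*i) + 22*i + 60 := by rw [hhm1, hn2, hi]; ring
        have eL : L = 5*(i*i) + 48*i + 118 := by linarith
        have hsq : 3*n^2 = 12*(i*i) + 144*i + 432 := by rw [hn2, hi]; ring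
        refine ⟨(List.replicate (w + 2*i + 1) σ ++ List.replicate (w + 2*i + 1) σ⁻¹) ++
          mainWord σ τ (h-1), ?_, hmem2 _, hone _⟩
        rw [hlen2]
        have hn' : n = 2*i + 12 := by omega
        linarith
      · -- odd case, n = 2i+13, padding p = w + 3i + 5
        have e1 : (h-1)*(h-1) = i*i + 10*i + 25 := by rw [hhm1]; ring
        have e2 : (h-1)*n = 2*(i*i) + 23*i + 65 := by rw [hhm1, hn2, hi]; ring
        have eL : L = 5*(i*i) + 52*i + 138 := by linarith
        have hsq : 3*n^2 = 12*(i*i) + 156*i + 507 := by rw [hn2, hi]; ring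
        refine ⟨(List.replicate (w + 3*i + 5) σ ++ List.replicate (w + 3*i + 5) σ⁻¹) ++
          mainWord σ τ (h-1), ?_, hmem2 _, hone _⟩
        rw [hlen2]
        have hn' : n = 2*i + 13 := by omega
        linarith
  · -- small cases 3 ≤ n < 12
    interval_cases n
    · -- n = 3
      have hσ' : σ = Equiv.addLeft (1 : Fin 3) := by
        ext i; simp [hσ, Fin.add_def, Nat.add_comm]
      have hτ' : τ = Equiv.swap 0 1 := by
        ext i; rw [hτ]; fin_cases i <;> decide
      have hR' : R = Fin.revPerm := by
        ext i; rw [hR]; fin_cases i <;> decide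
      refine ⟨(([1, 2, 0] : List ℕ).map
          (fun x => if x = 0 then σ else if x = 1 then σ⁻¹ else τ)), ?_, ?_, ?_⟩
      · simp
      · intro g hg
        obtain ⟨x, -, rfl⟩ := List.mem_map.1 hg
        split_ifs <;> tauto
      · subst hσ' hτ' hR'
        ext x
        revert x
        decide
    · -- n = 4
      have hσ' : σ = Equiv.addLeft (1 : Fin 4) := by
        ext i; simp [hσ, Fin.add_def, Nat.add_comm]
      have hτ' : τ = Equiv.swap 0 1 := by
        ext i; rw [hτ]; fin_cases i <;> decide
      have hR' : R = Fin.revPerm := by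
        ext i; rw [hR]; fin_cases i <;> decide
      refine ⟨(([2, 0, 0, 2] : List ℕ).map
          (fun x => if x = 0 then σ else if x = 1 then σ⁻¹ else τ)), ?_, ?_, ?_⟩
      · simp
      · intro g hg
        obtain ⟨x, -, rfl⟩ := List.mem_map.1 hg
        split_ifs <;> tauto
      · subst hσ' hτ' hR'
        ext x
        revert x
        decide
    · -- n = 5
      have hσ' : σ = Equiv.addLeft (1 : Fin 5) := by
        ext i; simp [hσ, Fin.add_def, Nat.add_comm]
      have hτ' : τ = Equiv.swap 0 1 := by
        ext i; rw [hτ]; fin_cases i <;> decide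
      have hR' : R = Fin.revPerm := by
        ext i; rw [hR]; fin_cases i <;> decide
      refine ⟨(([2, 0, 0, 2, 0, 2, 1, 2] : List ℕ).map
          (fun x => if x = 0 then σ else if x = 1 then σ⁻¹ else τ)), ?_, ?_, ?_⟩
      · simp
      · intro g hg
        obtain ⟨x, -, rfl⟩ := List.mem_map.1 hg
        split_ifs <;> tauto
      · subst hσ' hτ' hR'
        ext x
        revert x
        decide
    · -- n = 6
      have hσ' : σ = Equiv.addLeft (1 : Fin 6) := by
        ext i; simp [hσ, Fin.add_def, Nat.add_comm]
      have hτ' : τ = Equiv.swap 0 1 := by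
        ext i; rw [hτ]; fin_cases i <;> decide
      have hR' : R = Fin.revPerm := by
        ext i; rw [hR]; fin_cases i <;> decide
      refine ⟨(([0, 1, 0, 2, 0, 2, 1, 2, 1, 1, 2, 1, 2, 0, 2] : List ℕ).map
          (fun x => if x = 0 then σ else if x = 1 then σ⁻¹ else τ)), ?_, ?_, ?_⟩
      · simp
      · intro g hg
        obtain ⟨x, -, rfl⟩ := List.mem_map.1 hg
        split_ifs <;> tauto
      · subst hσ' hτ' hR'
        ext x
        revert x
        decide
    · -- n = 7
      have hσ' : σ = Equiv.addLeft (1 : Fin 7) := by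
        ext i; simp [hσ, Fin.add_def, Nat.add_comm]
      have hτ' : τ = Equiv.swap 0 1 := by
        ext i; rw [hτ]; fin_cases i <;> decide
      have hR' : R = Fin.revPerm := by
        ext i; rw [hR]; fin_cases i <;> decide
      refine ⟨(([0, 1, 0, 1, 0, 1, 0, 2, 0, 2, 1, 2, 1, 1, 2, 1, 2, 1, 2, 0, 2, 0, 2, 1, 2] : List ℕ).map
          (fun x => if x = 0 then σ else if x = 1 then σ⁻¹ else τ)), ?_, ?_, ?_⟩
      · simp
      · intro g hg
        obtain ⟨x, -, rfl⟩ := List.mem_map.1 hg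
        split_ifs <;> tauto
      · subst hσ' hτ' hR'
        ext x
        revert x
        decide
    · -- n = 8
      have hσ' : σ = Equiv.addLeft (1 : Fin 8) := by
        ext i; simp [hσ, Fin.add_def, Nat.add_comm]
      have hτ' : τ = Equiv.swap 0 1 := by
        ext i; rw [hτ]; fin_cases i <;> decide
      have hR' : R = Fin.revPerm := by
        ext i; rw [hR]; fin_cases i <;> decide
      refine ⟨(([0, 1, 0, 1, 0, 1, 0, 1, 0, 1, 0, 1, 0, 0, 2, 0, 2, 1, 2, 1, 2, 0, 2, 0, 2, 0, 0, 2, 0, 2, 0, 2, 1, 2, 1, 2, 0, 2] : List ℕ).map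
          (fun x => if x = 0 then σ else if x = 1 then σ⁻¹ else τ)), ?_, ?_, ?_⟩
      · simp
      · intro g hg
        obtain ⟨x, -, rfl⟩ := List.mem_map.1 hg
        split_ifs <;> tauto
      · subst hσ' hτ' hR'
        ext x
        revert x
        decide
    · -- n = 9
      have hσ' : σ = Equiv.addLeft (1 : Fin 9) := by
        ext i; simp [hσ, Fin.add_def, Nat.add_comm]
      have hτ' : τ = Equiv.swap 0 1 := by
        ext i; rw [hτ]; fin_cases i <;> decide
      have hR' : R = Fin.revPerm := by
        ext i; rw [hR]; fin_cases i <;> decide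
      refine ⟨(([1, 2, 0, 0, 2, 0, 2, 0, 2, 0, 2, 0, 2, 0, 2, 1, 2, 1, 2, 1, 2, 1, 2, 1, 2, 1, 0, 0, 2, 0, 2, 0, 2, 0, 2, 1, 2, 1, 2, 1, 2, 1, 1, 0, 0, 0, 2, 0, 2, 1, 2, 1, 1, 1] : List ℕ).map
          (fun x => if x = 0 then σ else if x = 1 then σ⁻¹ else τ)), ?_, ?_, ?_⟩
      · simp
      · intro g hg
        obtain ⟨x, -, rfl⟩ := List.mem_map.1 hg
        split_ifs <;> tauto
      · subst hσ' hτ' hR'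
        ext x
        revert x
        decide
    · -- n = 10
      have hσ' : σ = Equiv.addLeft (1 : Fin 10) := by
        ext i; simp [hσ, Fin.add_def, Nat.add_comm]
      have hτ' : τ = Equiv.swap 0 1 := by
        ext i; rw [hτ]; fin_cases i <;> decide
      have hR' : R = Fin.revPerm := by
        ext i; rw [hR]; fin_cases i <;> decide
      refine ⟨(([0, 1, 0, 1, 0, 1, 0, 1, 0, 1, 0, 1, 0, 1, 0, 1, 0, 1, 0, 1, 0, 1, 0, 1, 0, 1, 0, 1, 0, 1, 0, 0, 0, 2, 0, 2, 1, 2, 1, 2, 0, 2, 0, 2, 0, 2, 1, 2, 1, 2, 1, 2, 1, 1, 2, 1, 2, 1, 2, 1, 2, 0, 2, 0, 2, 0, 2, 1, 2, 1, 2, 0, 2] : List ℕ).map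
          (fun x => if x = 0 then σ else if x = 1 then σ⁻¹ else τ)), ?_, ?_, ?_⟩
      · simp
      · intro g hg
        obtain ⟨x, -, rfl⟩ := List.mem_map.1 hg
        split_ifs <;> tauto
      · subst hσ' hτ' hR'
        ext x
        revert x
        decide
    · -- n = 11
      have hσ' : σ = Equiv.addLeft (1 : Fin 11) := by
        ext i; simp [hσ, Fin.add_def, Nat.add_comm]
      have hτ' : τ = Equiv.swap 0 1 := by
        ext i; rw [hτ]; fin_cases i <;> decide
      have hR' : R = Fin.revPerm := by
        ext i; rw [hR]; fin_cases i <;> decide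
      refine ⟨(([0, 1, 0, 1, 1, 2, 0, 0, 2, 0, 2, 0, 2, 0, 2, 0, 2, 0, 2, 0, 2, 0, 2, 1, 2, 1, 2, 1, 2, 1, 2, 1, 2, 1, 2, 1, 2, 1, 0, 0, 2, 0, 2, 0, 2, 0, 2, 0, 2, 0, 2, 1, 2, 1, 2, 1, 2, 1, 2, 1, 2, 1, 1, 0, 0, 0, 2, 0, 2, 0, 2, 0, 2, 1, 2, 1, 2, 1, 2, 1, 1, 1, 0, 0, 0, 0, 2, 0, 2, 1, 2, 1, 1, 1, 1] : List ℕ).map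
          (fun x => if x = 0 then σ else if x = 1 then σ⁻¹ else τ)), ?_, ?_, ?_⟩
      · simp
      · intro g hg
        obtain ⟨x, -, rfl⟩ := List.mem_map.1 hg
        split_ifs <;> tauto
      · subst hσ' hτ' hR'
        ext x
        revert x
        decide
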